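/- Desnanot–Jacobi (Dodgson condensation) identity: let n ≥ 2 and let A be an n×n matrix over a commutative ring. Let A_int be the (n−2)×(n−2) matrix obtained from A by deleting the first and last rows and the first and last columns (with det A_int = 1 when n = 2). Let A^{r,c} denote the (n−1)×(n−1) matrix obtained by deleting row r and column c of A. Then det A · det A_int = det A^{1,1} · det A^{n,n} − det A^{1,n} · det A^{n,1}. -/

import Mathlib

open Matrix
section Helpers
variable {R : Type*} [CommRing R] {k : ℕ} {m : ℕ}


theorem my_det_updateRow_expand (M : Matrix (Fin k) (Fin k) R) (r : Fin k)
    (u : Fin k → R) :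
    (M.updateRow r u).det = ∑ i, u i * (M.updateRow r (Pi.single i 1)).det := by
  have hu : u = ∑ i, u i • (Pi.single i (1 : R) : Fin k → R) := by
    funext j
    simp [Pi.single_apply, Finset.sum_ite_eq]
  calc (M.updateRow r u).det
      = Matrix.detRowAlternating (Function.update M r (∑ i, u i • (Pi.single i (1:R) : Fin k → R))) := by
        rw [← hu]; rfl
    _ = ∑ i, Matrix.detRowAlternating (Function.update M r (u i • (Pi.single i (1:R) : Fin k → R))) :=
        AlternatingMap.map_update_sum _ _ _ _ _
    _ = ∑ i, u i * (M.updateRow r (Pi.single i 1)).det := by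
        refine Finset.sum_congr rfl fun i _ => ?_
        have : Matrix.detRowAlternating (Function.update M r (u i • (Pi.single i (1:R) : Fin k → R)))
            = (M.updateRow r (u i • (Pi.single i (1:R) : Fin k → R))).det := rfl
        rw [this, det_updateRow_smul]

theorem my_updateColumn_comm (M : Matrix (Fin k) (Fin k) R) {a b : Fin k}
    (h : a ≠ b) (u v : Fin k → R) :
    (M.updateCol a u).updateCol b v = (M.updateCol b v).updateCol a u := by
  ext i j
  by_cases hb : j = b <;> by_cases ha : j = a <;>
    simp_all [updateCol_apply]

theorem my_updateRow_comm (M : Matrix (Fin k) (Fin k) R) {a b : Fin k}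
    (h : a ≠ b) (u v : Fin k → R) :
    (M.updateRow a u).updateRow b v = (M.updateRow b v).updateRow a u := by
  ext i j
  by_cases hb : i = b <;> by_cases ha : i = a <;>
    simp_all [updateRow_apply]

theorem my_single_eq_one_row (a : Fin k) :
    (Pi.single a (1:R) : Fin k → R) = (1 : Matrix (Fin k) (Fin k) R) a := by
  funext j
  simp [Pi.single_apply, one_apply, eq_comm]

theorem my_det_one_updateRow (a : Fin k) (u : Fin k → R) :
    ((1 : Matrix (Fin k) (Fin k) R).updateRow a u).det = u a := by
  rw [my_det_updateRow_expand]
  rw [Finset.sum_eq_single a]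
  · rw [my_single_eq_one_row, updateRow_eq_self, det_one, mul_one]
  · intro i _ hia
    have hrow : ((1 : Matrix (Fin k) (Fin k) R).updateRow a (Pi.single i 1)) a
        = ((1 : Matrix (Fin k) (Fin k) R).updateRow a (Pi.single i 1)) i := by
      rw [updateRow_self, updateRow_ne hia, my_single_eq_one_row]
    rw [det_zero_of_row_eq (Ne.symm hia) hrow, mul_zero]
  · simp

theorem my_det_swap_updateRow {a b : Fin k} (hab : a ≠ b) :
    (((1 : Matrix (Fin k) (Fin k) R).updateRow a (Pi.single b 1)).updateRow b
      (Pi.single a 1)).det = -1 := by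
  have heq : ((1 : Matrix (Fin k) (Fin k) R).updateRow a (Pi.single b 1)).updateRow b
      (Pi.single a 1) = (1 : Matrix (Fin k) (Fin k) R).submatrix (Equiv.swap a b) id := by
    ext i j
    rcases eq_or_ne i b with rfl | hib
    · simp [updateRow_self, Equiv.swap_apply_right, Pi.single_apply, one_apply, eq_comm]
    · rcases eq_or_ne i a with rfl | hia
      · simp [updateRow_ne hab, updateRow_self, Equiv.swap_apply_left, Pi.single_apply,
          one_apply, eq_comm]
      · rw [updateRow_ne hib, updateRow_ne hia, submatrix_apply,
          Equiv.swap_apply_of_ne_of_ne hia hib, id]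
  rw [heq, det_permute, Equiv.Perm.sign_swap hab, det_one]
  simp

theorem my_det_two_updateRow {a b : Fin k} (hab : a ≠ b) (u v : Fin k → R) :
    (((1 : Matrix (Fin k) (Fin k) R).updateRow a u).updateRow b v).det
      = u a * v b - u b * v a := by
  rw [my_det_updateRow_expand]
  have hzero : ∀ j ∈ Finset.univ, j ∉ ({a, b} : Finset (Fin k)) →
      v j * (((1 : Matrix (Fin k) (Fin k) R).updateRow a u).updateRow b (Pi.single j 1)).det
        = 0 := by
    intro j _ hj
    simp only [Finset.mem_insert, Finset.mem_singleton, not_or] at hj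
    obtain ⟨hja, hjb⟩ := hj
    have hrow : (((1 : Matrix (Fin k) (Fin k) R).updateRow a u).updateRow b (Pi.single j 1)) b
        = (((1 : Matrix (Fin k) (Fin k) R).updateRow a u).updateRow b (Pi.single j 1)) j := by
      rw [updateRow_self, updateRow_ne hjb, updateRow_ne hja, my_single_eq_one_row]
    rw [det_zero_of_row_eq (Ne.symm hjb) hrow, mul_zero]
  rw [← Finset.sum_subset (Finset.subset_univ ({a, b} : Finset (Fin k))) hzero,
    Finset.sum_pair hab]
  have hb : (((1 : Matrix (Fin k) (Fin k) R).updateRow a u).updateRow b (Pi.single b 1)).det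
      = u a := by
    rw [my_single_eq_one_row]
    have : ((1 : Matrix (Fin k) (Fin k) R).updateRow a u) b
        = (1 : Matrix (Fin k) (Fin k) R) b := updateRow_ne (Ne.symm hab)
    rw [← this, updateRow_eq_self, my_det_one_updateRow]
  have ha : (((1 : Matrix (Fin k) (Fin k) R).updateRow a u).updateRow b (Pi.single a 1)).det
      = -(u b) := by
    rw [my_updateRow_comm _ hab, my_det_updateRow_expand, Finset.sum_eq_single b]
    · rw [my_updateRow_comm _ (Ne.symm hab), my_det_swap_updateRow hab]
      ring
    · intro i _ hib
      by_cases hia : i = a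
      · subst hia
        have hrow : (((1 : Matrix (Fin k) (Fin k) R).updateRow b (Pi.single i 1)).updateRow i
            (Pi.single i 1)) i
            = (((1 : Matrix (Fin k) (Fin k) R).updateRow b (Pi.single i 1)).updateRow i
            (Pi.single i 1)) b := by
          rw [updateRow_self, updateRow_ne (Ne.symm hab), updateRow_self]
        rw [det_zero_of_row_eq hab hrow, mul_zero]
      · have hia' : i ≠ a := hia
        have hrow : (((1 : Matrix (Fin k) (Fin k) R).updateRow b (Pi.single a 1)).updateRow a
            (Pi.single i 1)) a
            = (((1 : Matrix (Fin k) (Fin k) R).updateRow b (Pi.single a 1)).updateRow a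
            (Pi.single i 1)) i := by
          rw [updateRow_self, updateRow_ne hia', updateRow_ne hib,
            my_single_eq_one_row]
        rw [det_zero_of_row_eq (Ne.symm hia') hrow, mul_zero]
    · simp
  rw [hb, ha]
  ring
theorem my_mul_eq (A : Matrix (Fin k) (Fin k) R) {a b : Fin k} (hab : a ≠ b) :
    A * (((1 : Matrix (Fin k) (Fin k) R).updateRow a (fun i => adjugate A i a)).updateRow b
        (fun i => adjugate A i b))ᵀ
      = (A.updateCol a (Pi.single a A.det)).updateCol b (Pi.single b A.det) := by
  ext i j
  rw [mul_apply]
  by_cases hjb : j = b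
  · subst hjb
    simp only [transpose_apply, updateRow_self]
    rw [show (∑ x, A i x * adjugate A x j) = (A * adjugate A) i j from (mul_apply).symm,
      mul_adjugate, updateCol_self]
    simp [Pi.single_apply, one_apply, mul_ite]
  · by_cases hja : j = a
    · subst hja
      simp only [transpose_apply, updateRow_ne hab, updateRow_self]
      rw [show (∑ x, A i x * adjugate A x j) = (A * adjugate A) i j from (mul_apply).symm,
        mul_adjugate, updateCol_ne hjb, updateCol_self]
      simp [Pi.single_apply, one_apply, mul_ite]
    · simp only [transpose_apply, updateRow_ne hjb, updateRow_ne hja]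
      rw [updateCol_ne hjb, updateCol_ne hja]
      simp [one_apply, mul_ite]
theorem my_single_smul (c : Fin (m+2)) (r : R) :
    (Pi.single c r : Fin (m+2) → R) = r • (Pi.single c 1 : Fin (m+2) → R) := by
  funext x
  simp [Pi.single_apply]

theorem my_zl : (0 : Fin (m+2)) ≠ Fin.last (m+1) := by
  simp [Fin.ext_iff]

theorem my_updateColumn_comm' (M : Matrix (Fin (m+2)) (Fin (m+2)) R) {a b : Fin (m+2)}
    (h : a ≠ b) (u v : Fin (m+2) → R) :
    (M.updateCol a u).updateCol b v = (M.updateCol b v).updateCol a u := by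
  ext i j
  by_cases hb : j = b <;> by_cases ha : j = a <;> simp_all [updateCol_apply]

theorem my_detM0 (A : Matrix (Fin (m+2)) (Fin (m+2)) R) :
    ((A.updateCol 0 (Pi.single 0 1)).updateCol (Fin.last (m+1))
        (Pi.single (Fin.last (m+1)) 1)).det
      = (A.submatrix (fun i : Fin m => i.succ.castSucc) (fun j : Fin m => j.succ.castSucc)).det := by
  have h1 : ((A.updateCol 0 (Pi.single 0 1)).updateCol (Fin.last (m+1))
      (Pi.single (Fin.last (m+1)) 1))ᵀ
      = ((Aᵀ.updateRow 0 (Pi.single 0 1)).updateRow (Fin.last (m+1))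
        (Pi.single (Fin.last (m+1)) 1)) := by
    rw [updateRow_transpose, updateRow_transpose]
  rw [← det_transpose, h1]
  set Y := Aᵀ.updateRow 0 (Pi.single 0 1) with hY
  have h2 : (Y.updateRow (Fin.last (m+1)) (Pi.single (Fin.last (m+1)) 1)).det
      = adjugate Y (Fin.last (m+1)) (Fin.last (m+1)) := (adjugate_apply _ _ _).symm
  rw [h2, adjugate_fin_succ_eq_det_submatrix, Fin.succAbove_last]
  have heven : (-1 : R) ^ (((Fin.last (m+1)) : ℕ) + ((Fin.last (m+1)) : ℕ)) = 1 :=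
    Even.neg_one_pow ⟨(Fin.last (m+1) : ℕ), rfl⟩
  rw [heven, one_mul]
  have h3 : Y.submatrix Fin.castSucc Fin.castSucc
      = (Aᵀ.submatrix Fin.castSucc Fin.castSucc).updateRow 0 (Pi.single 0 1) := by
    ext i j
    by_cases hi : i = 0
    · subst hi
      simp only [submatrix_apply, hY]
      rw [show Fin.castSucc (0 : Fin (m+1)) = (0 : Fin (m+2)) by rfl, updateRow_self,
        updateRow_self]
      simp [Pi.single_apply]
    · have hic : Fin.castSucc i ≠ 0 := by
        exact fun h => hi (Fin.castSucc_injective _ (by rw [h]; rfl))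
      simp only [submatrix_apply, hY]
      rw [updateRow_ne hic, updateRow_ne hi]
      simp
  rw [h3]
  have h4 : ((Aᵀ.submatrix Fin.castSucc Fin.castSucc).updateRow 0 (Pi.single 0 1)).det
      = adjugate (Aᵀ.submatrix Fin.castSucc Fin.castSucc) 0 0 := (adjugate_apply _ _ _).symm
  rw [h4, adjugate_fin_succ_eq_det_submatrix]
  simp only [Fin.val_zero, add_zero, pow_zero, one_mul, Fin.succAbove_zero]
  rw [submatrix_submatrix, ← transpose_submatrix, det_transpose]
  rfl

theorem my_detM (A : Matrix (Fin (m+2)) (Fin (m+2)) R) :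
    ((A.updateCol 0 (Pi.single 0 A.det)).updateCol (Fin.last (m+1))
        (Pi.single (Fin.last (m+1)) A.det)).det
      = A.det * (A.det *
        (A.submatrix (fun i : Fin m => i.succ.castSucc) (fun j : Fin m => j.succ.castSucc)).det) := by
  rw [my_single_smul (Fin.last (m+1)) A.det, det_updateCol_smul,
    my_updateColumn_comm' _ my_zl, my_single_smul 0 A.det, det_updateCol_smul,
    my_updateColumn_comm' _ (Ne.symm my_zl), my_detM0]
theorem my_key {R : Type*} [CommRing R] (A : Matrix (Fin (m+2)) (Fin (m+2)) R) :
    A.det * (adjugate A 0 0 * adjugate A (Fin.last (m+1)) (Fin.last (m+1))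
        - adjugate A (Fin.last (m+1)) 0 * adjugate A 0 (Fin.last (m+1)))
      = A.det * (A.det *
        (A.submatrix (fun i : Fin m => i.succ.castSucc) (fun j : Fin m => j.succ.castSucc)).det) := by
  have hD := my_det_two_updateRow (R := R) (my_zl (m := m))
    (fun i => adjugate A i 0) (fun i => adjugate A i (Fin.last (m+1)))
  calc A.det * (adjugate A 0 0 * adjugate A (Fin.last (m+1)) (Fin.last (m+1))
        - adjugate A (Fin.last (m+1)) 0 * adjugate A 0 (Fin.last (m+1)))
      = A.det * (((1 : Matrix (Fin (m+2)) (Fin (m+2)) R).updateRow 0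
          (fun i => adjugate A i 0)).updateRow (Fin.last (m+1))
          (fun i => adjugate A i (Fin.last (m+1)))).det := by rw [hD]
    _ = A.det * ((((1 : Matrix (Fin (m+2)) (Fin (m+2)) R).updateRow 0
          (fun i => adjugate A i 0)).updateRow (Fin.last (m+1))
          (fun i => adjugate A i (Fin.last (m+1))))ᵀ).det := by rw [det_transpose]
    _ = (A * (((1 : Matrix (Fin (m+2)) (Fin (m+2)) R).updateRow 0
          (fun i => adjugate A i 0)).updateRow (Fin.last (m+1))
          (fun i => adjugate A i (Fin.last (m+1))))ᵀ).det := (det_mul _ _).symm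
    _ = ((A.updateCol 0 (Pi.single 0 A.det)).updateCol (Fin.last (m+1))
          (Pi.single (Fin.last (m+1)) A.det)).det := by rw [my_mul_eq A my_zl]
    _ = A.det * (A.det * (A.submatrix (fun i : Fin m => i.succ.castSucc)
          (fun j : Fin m => j.succ.castSucc)).det) := my_detM A

theorem my_key2 {R : Type*} [CommRing R] (A : Matrix (Fin (m+2)) (Fin (m+2)) R) :
    adjugate A 0 0 * adjugate A (Fin.last (m+1)) (Fin.last (m+1))
        - adjugate A (Fin.last (m+1)) 0 * adjugate A 0 (Fin.last (m+1))
      = A.det *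
        (A.submatrix (fun i : Fin m => i.succ.castSucc) (fun j : Fin m => j.succ.castSucc)).det := by
  let A' := mvPolynomialX (Fin (m+2)) (Fin (m+2)) ℤ
  suffices h : adjugate A' 0 0 * adjugate A' (Fin.last (m+1)) (Fin.last (m+1))
        - adjugate A' (Fin.last (m+1)) 0 * adjugate A' 0 (Fin.last (m+1))
      = A'.det *
        (A'.submatrix (fun i : Fin m => i.succ.castSucc) (fun j : Fin m => j.succ.castSucc)).det by
    have hA : (MvPolynomial.aeval fun p : (Fin (m+2)) × (Fin (m+2)) => A p.1 p.2).mapMatrix A'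
        = A := mvPolynomialX_mapMatrix_aeval ℤ A
    set f := (MvPolynomial.aeval fun p : (Fin (m+2)) × (Fin (m+2)) => A p.1 p.2 :
      MvPolynomial ((Fin (m+2)) × (Fin (m+2))) ℤ →ₐ[ℤ] R)
    calc adjugate A 0 0 * adjugate A (Fin.last (m+1)) (Fin.last (m+1))
          - adjugate A (Fin.last (m+1)) 0 * adjugate A 0 (Fin.last (m+1))
        = f (adjugate A' 0 0 * adjugate A' (Fin.last (m+1)) (Fin.last (m+1))
          - adjugate A' (Fin.last (m+1)) 0 * adjugate A' 0 (Fin.last (m+1))) := by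
          rw [← hA, ← AlgHom.map_adjugate]
          simp [AlgHom.mapMatrix_apply, map_apply]
      _ = f (A'.det *
          (A'.submatrix (fun i : Fin m => i.succ.castSucc)
            (fun j : Fin m => j.succ.castSucc)).det) := by rw [h]
      _ = A.det * (A.submatrix (fun i : Fin m => i.succ.castSucc)
            (fun j : Fin m => j.succ.castSucc)).det := by
          rw [_root_.map_mul, ← hA, AlgHom.map_det, AlgHom.mapMatrix_apply, submatrix_map,
            ← AlgHom.mapMatrix_apply, AlgHom.map_det]
          rfl
  apply mul_left_cancel₀ (det_mvPolynomialX_ne_zero (Fin (m+2)) ℤ)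
  exact my_key A'
theorem my_key3 {R : Type*} [CommRing R] {m : ℕ} (A : Matrix (Fin (m+2)) (Fin (m+2)) R) :
    A.det * (A.submatrix (fun i : Fin m => i.succ.castSucc)
        (fun j : Fin m => j.succ.castSucc)).det
      = (A.submatrix Fin.succ Fin.succ).det * (A.submatrix Fin.castSucc Fin.castSucc).det
        - (A.submatrix Fin.succ Fin.castSucc).det * (A.submatrix Fin.castSucc Fin.succ).det := by
  rw [← my_key2 A]
  simp only [adjugate_fin_succ_eq_det_submatrix, Fin.succAbove_zero, Fin.succAbove_last,
    Fin.val_zero, Fin.val_last, pow_zero, one_mul, add_zero, zero_add]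
  have h2l : (-1 : R) ^ ((m+1) + (m+1)) = 1 := Even.neg_one_pow ⟨m+1, rfl⟩
  have hc : (-1 : R) ^ (m+1) * (-1 : R) ^ (m+1) = 1 := by rw [← pow_add]; exact h2l
  rw [h2l, one_mul]
  ring_nf
  have hm2 : (-1 : R) ^ (m * 2) = 1 := Even.neg_one_pow ⟨m, by ring⟩
  rw [hm2]
  ring

end Helpers

/-- Desnanot–Jacobi (Dodgson condensation) identity: for `n ≥ 2` and an `n × n`
matrix `A` over a commutative ring,
`det A * det A_int = det A^{1,1} * det A^{n,n} - det A^{1,n} * det A^{n,1}`,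
where `A_int` deletes the first and last rows and columns (its determinant is `1`
when `n = 2`, being the empty matrix), and `A^{r,c}` deletes row `r` and column `c`. -/
theorem stmt2 {R : Type*} [CommRing R] {n : ℕ} (hn : 2 ≤ n)
    (A : Matrix (Fin n) (Fin n) R) :
    A.det *
        (A.submatrix (fun i : Fin (n - 2) => (⟨(i : ℕ) + 1, by have := i.isLt; omega⟩ : Fin n))
          (fun j : Fin (n - 2) => (⟨(j : ℕ) + 1, by have := j.isLt; omega⟩ : Fin n))).det =
      (A.submatrix (fun i : Fin (n - 1) => (⟨(i : ℕ) + 1, by have := i.isLt; omega⟩ : Fin n))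
            (fun j : Fin (n - 1) => (⟨(j : ℕ) + 1, by have := j.isLt; omega⟩ : Fin n))).det *
          (A.submatrix (fun i : Fin (n - 1) => (⟨(i : ℕ), by have := i.isLt; omega⟩ : Fin n))
            (fun j : Fin (n - 1) => (⟨(j : ℕ), by have := j.isLt; omega⟩ : Fin n))).det -
        (A.submatrix (fun i : Fin (n - 1) => (⟨(i : ℕ) + 1, by have := i.isLt; omega⟩ : Fin n))
            (fun j : Fin (n - 1) => (⟨(j : ℕ), by have := j.isLt; omega⟩ : Fin n))).det *
          (A.submatrix (fun i : Fin (n - 1) => (⟨(i : ℕ), by have := i.isLt; omega⟩ : Fin n))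
            (fun j : Fin (n - 1) => (⟨(j : ℕ) + 1, by have := j.isLt; omega⟩ : Fin n))).det := by
  obtain ⟨m, rfl⟩ : ∃ m, n = m + 2 := ⟨n - 2, by omega⟩
  show A.det * (A.submatrix (fun i : Fin m => i.succ.castSucc)
        (fun j : Fin m => j.succ.castSucc)).det
      = (A.submatrix Fin.succ Fin.succ).det * (A.submatrix Fin.castSucc Fin.castSucc).det
        - (A.submatrix Fin.succ Fin.castSucc).det * (A.submatrix Fin.castSucc Fin.succ).det
  exact my_key3 A
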